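/- Let X be a nonnegative random variable with cumulative distribution function F and finite mean E[X] = ∫₀^∞ (1 − F(x)) dx. Then for every m ∈ ℕ, the cumulative residual entropy of X satisfies the lower bound 𝓔(X) ≥ Σ_{n=1}^m μ_{n+1:n+1}/(n(n+1)) − E[X]. -/

import Mathlib

open MeasureTheory ProbabilityTheory Set
open scoped ENNReal

lemma sum_identity (p : ℝ) (m : ℕ) :
    ∑ n ∈ Finset.range m, (1 - p ^ (n + 2)) / (((n : ℝ) + 1) * ((n : ℝ) + 2))
      = m / (m + 1) - p + (1 - p) * ∑ n ∈ Finset.range m, p ^ (n + 1) / ((n : ℝ) + 1)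
        + p ^ (m + 1) / (m + 1) := by
  induction m with
  | zero => simp
  | succ m ih =>
      rw [Finset.sum_range_succ, ih, Finset.sum_range_succ]
      have h1 : ((m : ℝ) + 1) ≠ 0 := by positivity
      have h2 : ((m : ℝ) + 2) ≠ 0 := by positivity
      push_cast
      field_simp
      ring

lemma real_key (p : ℝ) (hp0 : 0 ≤ p) (hp1 : p ≤ 1) (m : ℕ) :
    ∑ n ∈ Finset.range m, (1 - p ^ (n + 2)) / (((n : ℝ) + 1) * ((n : ℝ) + 2))
      ≤ -((1 - p) * Real.log (1 - p)) + (1 - p) := by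
  rcases eq_or_lt_of_le hp1 with h1 | h1
  · subst h1
    simp
  · have hq : 0 < 1 - p := by linarith
    have hL : ∑ n ∈ Finset.range m, p ^ (n + 1) / ((n : ℝ) + 1) ≤ -Real.log (1 - p) := by
      exact sum_le_hasSum _ (fun i _ => by positivity)
        (Real.hasSum_pow_div_log_of_abs_lt_one (by rw [abs_of_nonneg hp0]; exact h1))
    rw [sum_identity]
    have hpow : p ^ (m + 1) ≤ 1 := pow_le_one₀ hp0 hp1
    have h2 : (1 - p) * ∑ n ∈ Finset.range m, p ^ (n + 1) / ((n : ℝ) + 1)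
        ≤ (1 - p) * (-Real.log (1 - p)) := by
      exact mul_le_mul_of_nonneg_left hL hq.le
    have h3 : (m : ℝ) / (m + 1) + p ^ (m + 1) / (m + 1) ≤ 1 := by
      rw [← add_div, div_le_one (by positivity)]
      linarith
    nlinarith [h2, h3]

lemma ennreal_key (p : ℝ) (hp0 : 0 ≤ p) (hp1 : p ≤ 1) (m : ℕ) :
    ∑ n ∈ Finset.range m,
        (((n : ℝ≥0∞) + 1) * ((n : ℝ≥0∞) + 2))⁻¹ * ENNReal.ofReal (1 - p ^ (n + 2))
      ≤ ENNReal.ofReal (-((1 - p) * Real.log (1 - p))) + ENNReal.ofReal (1 - p) := by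
  have hterm : ∀ n : ℕ,
      (((n : ℝ≥0∞) + 1) * ((n : ℝ≥0∞) + 2))⁻¹ * ENNReal.ofReal (1 - p ^ (n + 2))
        = ENNReal.ofReal ((1 - p ^ (n + 2)) / (((n : ℝ) + 1) * ((n : ℝ) + 2))) := by
    intro n
    rw [ENNReal.ofReal_div_of_pos (by positivity), div_eq_mul_inv, mul_comm]
    congr 1
    rw [ENNReal.ofReal_mul (by positivity)]
    congr 1 <;>
      simp [ENNReal.ofReal_add (Nat.cast_nonneg n), ENNReal.ofReal_natCast]
  simp_rw [hterm]
  rw [← ENNReal.ofReal_sum_of_nonneg (fun n _ => by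
        have : p ^ (n + 2) ≤ 1 := pow_le_one₀ hp0 hp1
        exact div_nonneg (by linarith) (by positivity))]
  have hA : 0 ≤ -((1 - p) * Real.log (1 - p)) := by
    rcases eq_or_lt_of_le hp1 with h1 | h1
    · simp [← h1]
    · have hq : 0 < 1 - p := by linarith
      have : Real.log (1 - p) ≤ 0 := Real.log_nonpos (by linarith) (by linarith)
      nlinarith
  rw [← ENNReal.ofReal_add hA (by linarith)]
  exact ENNReal.ofReal_le_ofReal (real_key p hp0 hp1 m)


/-- For a nonnegative random variable with cdf `F = cdf μ` and finite mean
`E[X] = ∫₀^∞ (1 - F x) dx`, for every `m ∈ ℕ` the cumulative residual entropy satisfies the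
lower bound `𝓔(X) ≥ ∑_{n=1}^m μ_{n+1:n+1} / (n (n+1)) - E[X]`, i.e. (in `[0, ∞]`)
`∑_{n=1}^m μ_{n+1:n+1} / (n (n+1)) ≤ 𝓔(X) + E[X]`, where
`μ_{k:k} = ∫₀^∞ (1 - (F x)^k) dx` is the mean of the largest order statistic. -/
theorem finite_sum_max_order_stats_le_cre_add_mean
    (μ : Measure ℝ) [IsProbabilityMeasure μ] (hnonneg : μ (Set.Iio 0) = 0)
    (hmean : ∫⁻ x in Set.Ioi (0 : ℝ), ENNReal.ofReal (1 - cdf μ x) ≠ ⊤) :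
    ∀ m : ℕ,
      ∑ n ∈ Finset.range m,
          (∫⁻ x in Set.Ioi (0 : ℝ), ENNReal.ofReal (1 - (cdf μ x) ^ (n + 2)))
            / (((n : ℝ≥0∞) + 1) * ((n : ℝ≥0∞) + 2))
        ≤ (∫⁻ x in Set.Ioi (0 : ℝ),
              ENNReal.ofReal (-((1 - cdf μ x) * Real.log (1 - cdf μ x))))
            + ∫⁻ x in Set.Ioi (0 : ℝ), ENNReal.ofReal (1 - cdf μ x) := by
  intro m
  have hF : Measurable (fun x => cdf μ x) := (cdf μ).mono.measurable
  have hmeasn : ∀ n : ℕ, Measurable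
      (fun x => (((n : ℝ≥0∞) + 1) * ((n : ℝ≥0∞) + 2))⁻¹
        * ENNReal.ofReal (1 - (cdf μ x) ^ (n + 2))) := by
    intro n
    exact (ENNReal.measurable_ofReal.comp ((measurable_const.sub (hF.pow_const _)))).const_mul _
  calc ∑ n ∈ Finset.range m,
          (∫⁻ x in Set.Ioi (0 : ℝ), ENNReal.ofReal (1 - (cdf μ x) ^ (n + 2)))
            / (((n : ℝ≥0∞) + 1) * ((n : ℝ≥0∞) + 2))
      = ∑ n ∈ Finset.range m, ∫⁻ x in Set.Ioi (0 : ℝ),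
          (((n : ℝ≥0∞) + 1) * ((n : ℝ≥0∞) + 2))⁻¹
            * ENNReal.ofReal (1 - (cdf μ x) ^ (n + 2)) := by
        refine Finset.sum_congr rfl fun n _ => ?_
        rw [div_eq_mul_inv, mul_comm, lintegral_const_mul' _ _ (by
          simp [ENNReal.mul_eq_top])]
    _ = ∫⁻ x in Set.Ioi (0 : ℝ), ∑ n ∈ Finset.range m,
          (((n : ℝ≥0∞) + 1) * ((n : ℝ≥0∞) + 2))⁻¹
            * ENNReal.ofReal (1 - (cdf μ x) ^ (n + 2)) :=
        (lintegral_finset_sum _ fun n _ => hmeasn n).symm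
    _ ≤ ∫⁻ x in Set.Ioi (0 : ℝ),
          (ENNReal.ofReal (-((1 - cdf μ x) * Real.log (1 - cdf μ x)))
            + ENNReal.ofReal (1 - cdf μ x)) :=
        lintegral_mono fun x => ennreal_key _ (cdf_nonneg μ x) (cdf_le_one μ x) m
    _ = _ := lintegral_add_left
        (((measurable_const.sub hF).mul
          ((measurable_const.sub hF).log)).neg.ennreal_ofReal) _
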